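/- Consider the quadratic game min_θ max_φ θᵀAθ + φᵀBφ + θᵀCφ with A ∈ ℝ^{n×n} symmetric positive definite, B ∈ ℝ^{n×n} symmetric negative definite, and C ∈ ℝ^{n×n} full rank, whose stationary point is the origin. For any η > 0, if (θ_{t+1}, φ_{t+1}) satisfies the SPPM equations θ_{t+1} = θ_t − ηAθ_t − ηCφ_{t+1} and φ_{t+1} = φ_t + ηBφ_t + ηCᵀθ_{t+1}, then ‖θ_{t+1}‖² + ‖φ_{t+1}‖² ≤ (‖I_n − ηA‖_op² ‖θ_t‖² + ‖I_n + ηB‖_op² ‖φ_t‖²) / (1 + η² λ_min(CᵀC)), where ‖·‖_op is the operator norm (equal to the spectral radius for symmetric matrices) and λ_min(CᵀC) > 0 is the smallest eigenvalue of CᵀC. -/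

import Mathlib

open Matrix Filter Topology

/-- The squared Euclidean norm of a vector `v : ι → ℝ`. -/
noncomputable def eNormSq {ι : Type*} [Fintype ι] (v : ι → ℝ) : ℝ :=
  ‖(EuclideanSpace.equiv ι ℝ).symm v‖ ^ 2

theorem EuclideanSpace.inner_piLp_equiv_symm {ι : Type*} [Fintype ι] (x y : ι → ℝ) :
    inner ℝ ((WithLp.equiv 2 (ι → ℝ)).symm x : EuclideanSpace ℝ ι) ((WithLp.equiv 2 (ι → ℝ)).symm y)
      = dotProduct (star x) y :=
  (EuclideanSpace.inner_eq_star_dotProduct _ _).trans (dotProduct_comm _ _)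

theorem Matrix.toEuclideanCLM_piLp_equiv_symm {n : ℕ} (M : Matrix (Fin n) (Fin n) ℝ) (v : Fin n → ℝ) :
    Matrix.toEuclideanCLM (𝕜 := ℝ) M ((WithLp.equiv 2 (Fin n → ℝ)).symm v)
      = (WithLp.equiv 2 (Fin n → ℝ)).symm (M *ᵥ v) := rfl

lemma eNormSq_eq_dot {n : ℕ} (v : Fin n → ℝ) : eNormSq v = v ⬝ᵥ v := by
  rw [eNormSq, ← real_inner_self_eq_norm_sq]
  exact (EuclideanSpace.inner_piLp_equiv_symm v v).trans (by simp)

lemma dot_self_nonneg {n : ℕ} (v : Fin n → ℝ) : 0 ≤ v ⬝ᵥ v :=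
  Finset.sum_nonneg fun i _ => mul_self_nonneg _

lemma dot_sq_le {n : ℕ} (v w : Fin n → ℝ) : (v ⬝ᵥ w) ^ 2 ≤ (v ⬝ᵥ v) * (w ⬝ᵥ w) := by
  have h := real_inner_mul_inner_self_le
    ((WithLp.equiv 2 (Fin n → ℝ)).symm v : EuclideanSpace ℝ (Fin n))
    ((WithLp.equiv 2 (Fin n → ℝ)).symm w)
  simp only [EuclideanSpace.inner_piLp_equiv_symm, star_trivial] at h
  nlinarith [h]

lemma rayleigh {n : ℕ} {H : Matrix (Fin n) (Fin n) ℝ} (hH : H.IsHermitian) {lmin : ℝ}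
    (h : IsLeast (Set.range hH.eigenvalues) lmin) (x : Fin n → ℝ) :
    lmin * (x ⬝ᵥ x) ≤ x ⬝ᵥ (H *ᵥ x) := by
  set b := hH.eigenvectorBasis with hb
  set x' : EuclideanSpace ℝ (Fin n) := (WithLp.equiv 2 (Fin n → ℝ)).symm x with hx'
  have hsymm : Hᵀ = H := by
    rw [← Matrix.conjTranspose_eq_transpose_of_trivial]; exact hH
  have key : ∀ i, (inner ℝ (b i) ((WithLp.equiv 2 (Fin n → ℝ)).symm (H *ᵥ x) : EuclideanSpace ℝ (Fin n)) : ℝ)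
      = hH.eigenvalues i * inner ℝ (b i) x' := by
    intro i
    have h1 : (⇑(b i) : Fin n → ℝ) ⬝ᵥ (H *ᵥ x) = (H *ᵥ ⇑(b i)) ⬝ᵥ x := by
      rw [dotProduct_mulVec, ← vecMul_transpose, hsymm, dotProduct_comm]
    have h2 := hH.mulVec_eigenvectorBasis i
    calc (inner ℝ (b i) ((WithLp.equiv 2 (Fin n → ℝ)).symm (H *ᵥ x) : EuclideanSpace ℝ (Fin n)) : ℝ)
        = (⇑(b i) : Fin n → ℝ) ⬝ᵥ (H *ᵥ x) := by
          rw [EuclideanSpace.inner_eq_star_dotProduct]; simp [dotProduct_comm]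
      _ = (H *ᵥ ⇑(b i)) ⬝ᵥ x := h1
      _ = hH.eigenvalues i * ((⇑(b i) : Fin n → ℝ) ⬝ᵥ x) := by rw [h2, smul_dotProduct]; simp [hb]
      _ = hH.eigenvalues i * inner ℝ (b i) x' := by
          rw [EuclideanSpace.inner_eq_star_dotProduct]; simp [hx', dotProduct_comm]
  have parsevalx : (x ⬝ᵥ x) = ∑ i, (inner ℝ (b i) x' : ℝ) * inner ℝ (b i) x' := by
    have := b.sum_inner_mul_inner x' x'
    simp only [EuclideanSpace.inner_piLp_equiv_symm, star_trivial, hx'] at this ⊢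
    rw [← this]
    congr 1; ext i; rw [real_inner_comm x' (b i)]
  have hHx : x ⬝ᵥ (H *ᵥ x) = ∑ i, hH.eigenvalues i * ((inner ℝ (b i) x' : ℝ) * inner ℝ (b i) x') := by
    have := b.sum_inner_mul_inner x' ((WithLp.equiv 2 (Fin n → ℝ)).symm (H *ᵥ x))
    rw [EuclideanSpace.inner_piLp_equiv_symm] at this
    simp only [star_trivial] at this
    rw [← this]
    congr 1; ext i
    rw [key i, real_inner_comm x' (b i)]; ring
  rw [parsevalx, hHx, Finset.mul_sum]
  apply Finset.sum_le_sum
  intro i _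
  have hl : lmin ≤ hH.eigenvalues i := h.2 ⟨i, rfl⟩
  nlinarith [mul_self_nonneg (inner ℝ (b i) x' : ℝ)]

lemma dot_CtC {n : ℕ} (C : Matrix (Fin n) (Fin n) ℝ) (v : Fin n → ℝ) :
    v ⬝ᵥ ((Cᵀ * C) *ᵥ v) = (C *ᵥ v) ⬝ᵥ (C *ᵥ v) := by
  rw [← mulVec_mulVec, dotProduct_mulVec, vecMul_transpose]

lemma rayleigh_transpose {n : ℕ} {C : Matrix (Fin n) (Fin n) ℝ} (hC : IsUnit C)
    (hCtC : (Cᵀ * C).IsHermitian) {lmin : ℝ}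
    (hlmin : IsLeast (Set.range hCtC.eigenvalues) lmin) (hlpos : 0 < lmin) (x : Fin n → ℝ) :
    lmin * (x ⬝ᵥ x) ≤ (Cᵀ *ᵥ x) ⬝ᵥ (Cᵀ *ᵥ x) := by
  set y := C⁻¹ *ᵥ x with hy
  have hCy : C *ᵥ y = x := by
    rw [hy, mulVec_mulVec, Matrix.mul_nonsing_inv _ ((Matrix.isUnit_iff_isUnit_det C).mp hC),
      one_mulVec]
  have s1 : lmin * (y ⬝ᵥ y) ≤ x ⬝ᵥ x := by
    have h := rayleigh hCtC hlmin y
    rwa [dot_CtC, hCy] at h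
  have s2 : x ⬝ᵥ x = y ⬝ᵥ (Cᵀ *ᵥ x) := by
    rw [dotProduct_mulVec y Cᵀ x, vecMul_transpose, hCy]
  have s3 : (x ⬝ᵥ x) ^ 2 ≤ (y ⬝ᵥ y) * ((Cᵀ *ᵥ x) ⬝ᵥ (Cᵀ *ᵥ x)) := by
    rw [s2]; exact dot_sq_le y (Cᵀ *ᵥ x)
  rcases eq_or_lt_of_le (dot_self_nonneg x) with h0 | h0
  · rw [← h0, mul_zero]
    exact dot_self_nonneg _
  · have hQ := dot_self_nonneg (Cᵀ *ᵥ x)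
    have hyy := dot_self_nonneg y
    nlinarith [mul_le_mul_of_nonneg_right s1 hQ, mul_le_mul_of_nonneg_left s3 hlpos.le]

lemma mulVec_norm_bound {n : ℕ} (M : Matrix (Fin n) (Fin n) ℝ) (v : Fin n → ℝ) :
    (M *ᵥ v) ⬝ᵥ (M *ᵥ v) ≤ ‖Matrix.toEuclideanCLM (𝕜 := ℝ) M‖ ^ 2 * (v ⬝ᵥ v) := by
  have h1 : ((WithLp.equiv 2 (Fin n → ℝ)).symm (M *ᵥ v) : EuclideanSpace ℝ (Fin n))
      = Matrix.toEuclideanCLM (𝕜 := ℝ) M ((WithLp.equiv 2 (Fin n → ℝ)).symm v) :=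
    (Matrix.toEuclideanCLM_piLp_equiv_symm M v).symm
  have h2 := (Matrix.toEuclideanCLM (𝕜 := ℝ) M).le_opNorm
    ((WithLp.equiv 2 (Fin n → ℝ)).symm v : EuclideanSpace ℝ (Fin n))
  have h3 : (M *ᵥ v) ⬝ᵥ (M *ᵥ v)
      = ‖((WithLp.equiv 2 (Fin n → ℝ)).symm (M *ᵥ v) : EuclideanSpace ℝ (Fin n))‖ ^ 2 := by
    rw [← real_inner_self_eq_norm_sq, EuclideanSpace.inner_piLp_equiv_symm, star_trivial]
  have h4 : v ⬝ᵥ v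
      = ‖((WithLp.equiv 2 (Fin n → ℝ)).symm v : EuclideanSpace ℝ (Fin n))‖ ^ 2 := by
    rw [← real_inner_self_eq_norm_sq, EuclideanSpace.inner_piLp_equiv_symm, star_trivial]
  rw [h3, h4, h1]
  have h5 := pow_le_pow_left₀ (norm_nonneg _) h2 2
  rwa [mul_pow] at h5

/-- one-step contraction of SPPM in the quadratic game (Theorem 4 of the paper). -/
theorem quadratic_sppm_contraction
    (n : ℕ) (A B C : Matrix (Fin n) (Fin n) ℝ)
    (hA : A.PosDef) (hB : (-B).PosDef) (hC : IsUnit C)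
    (η : ℝ) (hη : 0 < η)
    (hCtC : (Cᵀ * C).IsHermitian) (lmin : ℝ)
    (hlmin : IsLeast (Set.range hCtC.eigenvalues) lmin)
    (θ θ' φ φ' : Fin n → ℝ)
    (hθ' : θ' = θ - η • (A *ᵥ θ) - η • (C *ᵥ φ'))
    (hφ' : φ' = φ + η • (B *ᵥ φ) + η • (Cᵀ *ᵥ θ')) :
    eNormSq θ' + eNormSq φ' ≤
      (‖Matrix.toEuclideanCLM (𝕜 := ℝ) ((1 : Matrix (Fin n) (Fin n) ℝ) - η • A)‖ ^ 2 * eNormSq θ +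
       ‖Matrix.toEuclideanCLM (𝕜 := ℝ) ((1 : Matrix (Fin n) (Fin n) ℝ) + η • B)‖ ^ 2 * eNormSq φ) /
        (1 + η ^ 2 * lmin) := by
  -- positivity of lmin
  have hCtCpd : (Cᵀ * C).PosDef := by
    refine Matrix.PosDef.of_dotProduct_mulVec_pos hCtC fun x hx => ?_
    have hd : star x ⬝ᵥ ((Cᵀ * C) *ᵥ x) = (C *ᵥ x) ⬝ᵥ (C *ᵥ x) := by
      rw [star_trivial, dot_CtC]
    rw [hd]
    have hCx : C *ᵥ x ≠ 0 := by
      intro hz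
      apply hx
      have hinj : Function.Injective (C.mulVec) := Matrix.mulVec_injective_iff_isUnit.mpr hC
      exact hinj (by simpa using hz)
    rcases eq_or_lt_of_le (dot_self_nonneg (C *ᵥ x)) with h0 | h0
    · exact absurd ((dotProduct_self_eq_zero).mp h0.symm) hCx
    · exact h0
  have hlpos : 0 < lmin := by
    obtain ⟨i, hi⟩ := hlmin.1
    rw [← hi]
    exact hCtCpd.eigenvalues_pos i
  have hK : (0 : ℝ) < 1 + η ^ 2 * lmin := by positivity
  -- the implicit update identities
  have hu : ((1 : Matrix (Fin n) (Fin n) ℝ) - η • A) *ᵥ θ = θ' + η • (C *ᵥ φ') := by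
    rw [Matrix.sub_mulVec, Matrix.one_mulVec, Matrix.smul_mulVec, hθ']
    abel
  have hw : ((1 : Matrix (Fin n) (Fin n) ℝ) + η • B) *ᵥ φ = φ' - η • (Cᵀ *ᵥ θ') := by
    rw [Matrix.add_mulVec, Matrix.one_mulVec, Matrix.smul_mulVec, hφ']
    abel
  -- cross term identity
  have cross : θ' ⬝ᵥ (C *ᵥ φ') = φ' ⬝ᵥ (Cᵀ *ᵥ θ') := by
    rw [dotProduct_mulVec θ' C φ', ← mulVec_transpose, dotProduct_comm]
  -- expansion
  have expand : (((1 : Matrix (Fin n) (Fin n) ℝ) - η • A) *ᵥ θ) ⬝ᵥ (((1 : Matrix (Fin n) (Fin n) ℝ) - η • A) *ᵥ θ)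
      + (((1 : Matrix (Fin n) (Fin n) ℝ) + η • B) *ᵥ φ) ⬝ᵥ (((1 : Matrix (Fin n) (Fin n) ℝ) + η • B) *ᵥ φ)
      = θ' ⬝ᵥ θ' + φ' ⬝ᵥ φ'
        + η ^ 2 * ((C *ᵥ φ') ⬝ᵥ (C *ᵥ φ')) + η ^ 2 * ((Cᵀ *ᵥ θ') ⬝ᵥ (Cᵀ *ᵥ θ')) := by
    rw [hu, hw]
    simp only [dotProduct_add, add_dotProduct, dotProduct_sub, sub_dotProduct,
      dotProduct_smul, smul_dotProduct, smul_eq_mul]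
    rw [dotProduct_comm (C *ᵥ φ') θ', dotProduct_comm (Cᵀ *ᵥ θ') φ', cross]
    ring
  -- lower bounds on the quadratic correction terms
  have hb1 : lmin * (φ' ⬝ᵥ φ') ≤ (C *ᵥ φ') ⬝ᵥ (C *ᵥ φ') := by
    have h := rayleigh hCtC hlmin φ'
    rwa [dot_CtC] at h
  have hb2 : lmin * (θ' ⬝ᵥ θ') ≤ (Cᵀ *ᵥ θ') ⬝ᵥ (Cᵀ *ᵥ θ') :=
    rayleigh_transpose hC hCtC hlmin hlpos θ'
  -- operator norm upper bounds
  have hub1 := mulVec_norm_bound ((1 : Matrix (Fin n) (Fin n) ℝ) - η • A) θ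
  have hub2 := mulVec_norm_bound ((1 : Matrix (Fin n) (Fin n) ℝ) + η • B) φ
  rw [eNormSq_eq_dot, eNormSq_eq_dot, eNormSq_eq_dot, eNormSq_eq_dot, le_div_iff₀ hK]
  nlinarith [mul_le_mul_of_nonneg_left hb1 (sq_nonneg η),
    mul_le_mul_of_nonneg_left hb2 (sq_nonneg η), expand, hub1, hub2]
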